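/- Let n ≥ 2, i ∈ {0,1,…,n} and j ∈ {2,…,n}, and let V_{i,j} = {σ ∈ Alt_{n+1} : σ(j) = i}. Then in the star digraph ST⃗_{n+1}: the set of out-neighbors of V_{i,j} lying outside V_{i,j} is exactly {τ ∈ Alt_{n+1} : τ(0) = i}, the set of in-neighbors of V_{i,j} lying outside V_{i,j} is exactly {τ ∈ Alt_{n+1} : τ(1) = i}, and hence the set of all vertices outside V_{i,j} adjacent to V_{i,j} (by an arc in either direction) equals S_i = {τ ∈ Alt_{n+1} : τ(0) = i or τ(1) = i}, independently of j. -/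
import Mathlib


/-- The 3-cycle `gᵢ` determined by `gᵢ 0 = i`, `gᵢ i = 1`, `gᵢ 1 = 0`. -/
def gcyc {m : ℕ} [NeZero m] (i : Fin m) : Equiv.Perm (Fin m) :=
  Equiv.swap 1 i * Equiv.swap 0 1

/-- Vertices of the star digraph `ST⃗_m`: the even permutations of `{0, …, m-1}`. -/
abbrev StarVertex (m : ℕ) := {σ : Equiv.Perm (Fin m) // σ ∈ alternatingGroup (Fin m)}

/-- The arc relation of the star digraph `ST⃗_m`: there is an arc from `σ` to `σ ∘ gᵢ`
for each `i ∈ {2, …, m-1}`. -/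
def starArc {m : ℕ} [NeZero m] (σ τ : StarVertex m) : Prop :=
  ∃ i : Fin m, 2 ≤ i.val ∧ (τ : Equiv.Perm (Fin m)) = (σ : Equiv.Perm (Fin m)) * gcyc i

/-- The set `S_i = {σ ∈ Alt_m : σ 0 = i or σ 1 = i}`. -/
def Sset (m : ℕ) [NeZero m] (i : Fin m) : Set (StarVertex m) :=
  {σ | (σ : Equiv.Perm (Fin m)) 0 = i ∨ (σ : Equiv.Perm (Fin m)) 1 = i}

/-- The set `V_{i,j} = {σ ∈ Alt_m : σ j = i}`. -/
def Vset (m : ℕ) (i j : Fin m) : Set (StarVertex m) :=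
  {σ | (σ : Equiv.Perm (Fin m)) j = i}

section helpers

variable {m : ℕ} [NeZero m]

lemma gcyc_zero (i : Fin m) : gcyc i 0 = i := by
  simp only [gcyc, Equiv.Perm.mul_apply, Equiv.swap_apply_left, Equiv.swap_apply_right]

lemma gcyc_one (i : Fin m) (h01 : (0 : Fin m) ≠ 1) (h0i : (0 : Fin m) ≠ i) :
    gcyc i 1 = 0 := by
  simp only [gcyc, Equiv.Perm.mul_apply, Equiv.swap_apply_right]
  exact Equiv.swap_apply_of_ne_of_ne h01 h0i

lemma gcyc_self (i : Fin m) (hi0 : i ≠ 0) (hi1 : i ≠ 1) : gcyc i i = 1 := by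
  simp only [gcyc, Equiv.Perm.mul_apply, Equiv.swap_apply_of_ne_of_ne hi0 hi1,
    Equiv.swap_apply_right]

lemma gcyc_other (i x : Fin m) (hx0 : x ≠ 0) (hx1 : x ≠ 1) (hxi : x ≠ i) :
    gcyc i x = x := by
  simp only [gcyc, Equiv.Perm.mul_apply, Equiv.swap_apply_of_ne_of_ne hx0 hx1,
    Equiv.swap_apply_of_ne_of_ne hx1 hxi]

lemma gcyc_mem (i : Fin m) (h01 : (0 : Fin m) ≠ 1) (h1i : (1 : Fin m) ≠ i) :
    gcyc i ∈ alternatingGroup (Fin m) := by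
  simp [Equiv.Perm.mem_alternatingGroup, gcyc, map_mul,
    Equiv.Perm.sign_swap h01, Equiv.Perm.sign_swap h1i]

end helpers

/-- For `n ≥ 2`, `i ∈ {0, …, n}` and `j ∈ {2, …, n}`: in `ST⃗_{n+1}`, the out-neighbors of
`V_{i,j}` lying outside `V_{i,j}` are exactly the vertices `τ` with `τ 0 = i`, the
in-neighbors lying outside are exactly those with `τ 1 = i`, and the set of all outside
vertices adjacent to `V_{i,j}` in either direction is `S_i`, independently of `j`. -/
theorem stmt3 (n : ℕ) (hn : 2 ≤ n) (i j : Fin (n + 1)) (hj : 2 ≤ j.val) :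
    {τ : StarVertex (n + 1) | τ ∉ Vset (n + 1) i j ∧ ∃ σ ∈ Vset (n + 1) i j, starArc σ τ}
        = {τ : StarVertex (n + 1) | (τ : Equiv.Perm (Fin (n + 1))) 0 = i} ∧
    {τ : StarVertex (n + 1) | τ ∉ Vset (n + 1) i j ∧ ∃ σ ∈ Vset (n + 1) i j, starArc τ σ}
        = {τ : StarVertex (n + 1) | (τ : Equiv.Perm (Fin (n + 1))) 1 = i} ∧
    {τ : StarVertex (n + 1) | τ ∉ Vset (n + 1) i j ∧
        ∃ σ ∈ Vset (n + 1) i j, starArc σ τ ∨ starArc τ σ}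
        = Sset (n + 1) i := by
  have h01 : (0 : Fin (n + 1)) ≠ 1 := by
    obtain ⟨m, rfl⟩ : ∃ m, n = m + 2 := ⟨n - 2, by omega⟩
    exact Fin.zero_ne_one
  have hval1 : ∀ k : Fin (n + 1), 2 ≤ k.val → k ≠ 0 ∧ k ≠ 1 := by
    obtain ⟨m, rfl⟩ : ∃ m, n = m + 2 := ⟨n - 2, by omega⟩
    intro k hk
    constructor
    · intro h; subst h; simp at hk
    · intro h; subst h; simp [Fin.val_one] at hk
  have hj0 : j ≠ 0 := (hval1 j hj).1
  have hj1 : j ≠ 1 := (hval1 j hj).2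
  have h1 : {τ : StarVertex (n + 1) | τ ∉ Vset (n + 1) i j ∧
      ∃ σ ∈ Vset (n + 1) i j, starArc σ τ}
      = {τ : StarVertex (n + 1) | (τ : Equiv.Perm (Fin (n + 1))) 0 = i} := by
    ext τ
    simp only [Set.mem_setOf_eq, Vset, starArc]
    constructor
    · rintro ⟨hτ, σ, hσ, k, hk, hτeq⟩
      by_cases hkj : k = j
      · rw [hτeq, Equiv.Perm.mul_apply, gcyc_zero k, hkj, hσ]
      · exfalso
        apply hτ
        show (τ : Equiv.Perm (Fin (n + 1))) j = i
        rw [hτeq, Equiv.Perm.mul_apply,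
          gcyc_other k j hj0 hj1 (fun h => hkj h.symm), hσ]
    · intro hτ0
      have hτnotV : τ ∉ Vset (n + 1) i j := by
        intro hτV
        have heq : (τ : Equiv.Perm (Fin (n + 1))) j = (τ : Equiv.Perm (Fin (n + 1))) 0 := by
          rw [hτ0]; exact hτV
        exact hj0 ((τ : Equiv.Perm (Fin (n + 1))).injective heq)
      have hmem : (τ : Equiv.Perm (Fin (n + 1))) * (gcyc j)⁻¹ ∈
          alternatingGroup (Fin (n + 1)) :=
        mul_mem τ.2 (inv_mem (gcyc_mem j h01 (fun h => hj1 h.symm)))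
      refine ⟨hτnotV, ⟨_, hmem⟩, ?_, j, hj, ?_⟩
      · show ((τ : Equiv.Perm (Fin (n + 1))) * (gcyc j)⁻¹) j = i
        rw [Equiv.Perm.mul_apply]
        have hz : (gcyc j)⁻¹ j = 0 := by
          rw [Equiv.Perm.inv_def, Equiv.symm_apply_eq, gcyc_zero]
        rw [hz, hτ0]
      · show (τ : Equiv.Perm (Fin (n + 1)))
          = (τ : Equiv.Perm (Fin (n + 1))) * (gcyc j)⁻¹ * gcyc j
        group
  have h2 : {τ : StarVertex (n + 1) | τ ∉ Vset (n + 1) i j ∧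
      ∃ σ ∈ Vset (n + 1) i j, starArc τ σ}
      = {τ : StarVertex (n + 1) | (τ : Equiv.Perm (Fin (n + 1))) 1 = i} := by
    ext τ
    simp only [Set.mem_setOf_eq, Vset, starArc]
    constructor
    · rintro ⟨hτ, σ, hσ, k, hk, hσeq⟩
      by_cases hkj : k = j
      · have h := hσ
        rw [hσeq, Equiv.Perm.mul_apply, hkj,
          gcyc_self j hj0 hj1] at h
        exact h
      · exfalso
        apply hτ
        show (τ : Equiv.Perm (Fin (n + 1))) j = i
        rw [← hσ, hσeq, Equiv.Perm.mul_apply,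
          gcyc_other k j hj0 hj1 (fun h => hkj h.symm)]
    · intro hτ1
      have hτnotV : τ ∉ Vset (n + 1) i j := by
        intro hτV
        have heq : (τ : Equiv.Perm (Fin (n + 1))) j = (τ : Equiv.Perm (Fin (n + 1))) 1 := by
          rw [hτ1]; exact hτV
        exact hj1 ((τ : Equiv.Perm (Fin (n + 1))).injective heq)
      have hmem : (τ : Equiv.Perm (Fin (n + 1))) * gcyc j ∈
          alternatingGroup (Fin (n + 1)) :=
        mul_mem τ.2 (gcyc_mem j h01 (fun h => hj1 h.symm))
      refine ⟨hτnotV, ⟨_, hmem⟩, ?_, j, hj, rfl⟩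
      show ((τ : Equiv.Perm (Fin (n + 1))) * gcyc j) j = i
      rw [Equiv.Perm.mul_apply, gcyc_self j hj0 hj1, hτ1]
  refine ⟨h1, h2, ?_⟩
  ext τ
  have e1 := Set.ext_iff.mp h1 τ
  have e2 := Set.ext_iff.mp h2 τ
  simp only [Set.mem_setOf_eq] at e1 e2
  simp only [Set.mem_setOf_eq, Sset]
  constructor
  · rintro ⟨hτ, σ, hσ, harc | harc⟩
    · exact Or.inl (e1.mp ⟨hτ, σ, hσ, harc⟩)
    · exact Or.inr (e2.mp ⟨hτ, σ, hσ, harc⟩)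
  · rintro (h | h)
    · obtain ⟨hτ, σ, hσ, harc⟩ := e1.mpr h
      exact ⟨hτ, σ, hσ, Or.inl harc⟩
    · obtain ⟨hτ, σ, hσ, harc⟩ := e2.mpr h
      exact ⟨hτ, σ, hσ, Or.inr harc⟩
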